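/- For α ∈ ℝ and z > 0, the modified Bessel function of the second kind satisfies K_α(z) ~ √(π/(2z)) e^{−z} as z → ∞, i.e., the ratio K_α(z)/(√(π/(2z)) e^{−z}) tends to 1. -/

import Mathlib

open Real MeasureTheory Filter

lemma aux_rpow_mul_exp_le {β c x : ℝ} (hβ : 0 ≤ β) (hc : 0 < c) (hx : 0 ≤ x) :
    x ^ β * Real.exp (-(c * x)) ≤ (β / c) ^ β := by
  rcases eq_or_lt_of_le hβ with hβ0 | hβ0
  · simp only [← hβ0, Real.rpow_zero, one_mul]
    exact Real.exp_le_one_iff.mpr (by nlinarith)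
  rcases eq_or_lt_of_le hx with hx0 | hx0
  · rw [← hx0, Real.zero_rpow hβ0.ne', zero_mul]
    positivity
  have hbc : 0 < β / c := div_pos hβ0 hc
  rw [Real.rpow_def_of_pos hx0, Real.rpow_def_of_pos hbc, ← Real.exp_add, Real.exp_le_exp]
  have h1 : Real.log (x / (β / c)) ≤ x / (β / c) - 1 :=
    Real.log_le_sub_one_of_pos (div_pos hx0 hbc)
  have h2 : Real.log (x / (β / c)) = Real.log x - Real.log (β / c) :=
    Real.log_div hx0.ne' hbc.ne'
  have h3 : x / (β / c) = x * c / β := by field_simp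
  rw [h2, h3] at h1
  have h4 := mul_le_mul_of_nonneg_left h1 hβ
  have h5 : β * (x * c / β) = c * x := by field_simp
  nlinarith [h4, h5]

lemma aux_integrable_exp_neg_abs :
    Integrable (fun u : ℝ => Real.exp (-(|u| / 4))) := by
  have h1 : IntegrableOn (fun u : ℝ => Real.exp (-(|u| / 4))) (Set.Ioi 0) := by
    refine (exp_neg_integrableOn_Ioi 0 (show (0:ℝ) < 1/4 by norm_num)).congr_fun
      (fun x hx => ?_) measurableSet_Ioi
    rw [abs_of_pos hx]; ring_nf
  have h2 : IntegrableOn (fun u : ℝ => Real.exp (-(|u| / 4))) (Set.Iic 0) := by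
    rw [← Measure.map_neg_eq_self (volume : Measure ℝ)]
    have m : MeasurableEmbedding fun x : ℝ => -x := (Homeomorph.neg ℝ).measurableEmbedding
    rw [m.integrableOn_map_iff]
    simp_rw [Function.comp_def, abs_neg, Set.neg_preimage, Set.neg_Iic, neg_zero]
    exact (integrableOn_Ici_iff_integrableOn_Ioi).mpr h1
  have h3 := h2.union h1
  rwa [Set.Iic_union_Ioi, integrableOn_univ] at h3


lemma aux_key (α t : ℝ) (ht : 0 < t) :
    Real.sqrt t * (Real.exp t *
      ∫ s in Set.Ioi (0 : ℝ), s ^ (α - 1) * Real.exp (-(t / 2) * (s + 1 / s)))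
    = ∫ u : ℝ, (Set.Ioi (-Real.sqrt t)).indicator
        (fun u => (1 + u / Real.sqrt t) ^ (α - 1) *
          Real.exp (-(u ^ 2 / (2 * (1 + u / Real.sqrt t))))) u := by
  set c := Real.sqrt t with hc
  have hc0 : 0 < c := Real.sqrt_pos.mpr ht
  have hc2 : c ^ 2 = t := Real.sq_sqrt ht.le
  set φ : ℝ → ℝ := fun s => s ^ (α - 1) * Real.exp (-(t / 2 * (s - 1) ^ 2 / s)) with hφ
  have step1 : Real.exp t * ∫ s in Set.Ioi (0 : ℝ), s ^ (α - 1) * Real.exp (-(t / 2) * (s + 1 / s))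
      = ∫ s in Set.Ioi (0 : ℝ), φ s := by
    rw [← integral_const_mul]
    refine setIntegral_congr_fun measurableSet_Ioi (fun s hs => ?_)
    have hs0 : (0:ℝ) < s := hs
    simp only [hφ]
    rw [← mul_assoc, mul_comm (Real.exp t), mul_assoc, ← Real.exp_add]
    congr 2
    field_simp
    ring
  have step2 : ∫ s in Set.Ioi (0 : ℝ), φ s = ∫ s : ℝ, (Set.Ioi (0:ℝ)).indicator φ s :=
    (integral_indicator measurableSet_Ioi).symm
  have step3 : ∫ s : ℝ, (Set.Ioi (0:ℝ)).indicator φ s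
      = ∫ y : ℝ, (Set.Ioi (0:ℝ)).indicator φ (1 + y) :=
    (integral_add_left_eq_self ((Set.Ioi (0:ℝ)).indicator φ) 1).symm
  have step4 : c * ∫ y : ℝ, (Set.Ioi (0:ℝ)).indicator φ (1 + y)
      = ∫ u : ℝ, (Set.Ioi (0:ℝ)).indicator φ (1 + u / c) := by
    rw [MeasureTheory.Measure.integral_comp_div (fun y => (Set.Ioi (0:ℝ)).indicator φ (1 + y)) c,
      abs_of_pos hc0, smul_eq_mul]
  have step5 : ∀ u : ℝ, (Set.Ioi (0:ℝ)).indicator φ (1 + u / c)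
      = (Set.Ioi (-c)).indicator
        (fun u => (1 + u / c) ^ (α - 1) * Real.exp (-(u ^ 2 / (2 * (1 + u / c))))) u := by
    intro u
    by_cases hu : u ∈ Set.Ioi (-c)
    · have hu' : -c < u := hu
      have hdiv : (-1:ℝ) < u / c := by
        have h := (div_lt_div_iff_of_pos_right hc0).mpr hu'
        rwa [neg_div, div_self hc0.ne'] at h
      have hmem : (1 + u / c) ∈ Set.Ioi (0:ℝ) := by
        simp only [Set.mem_Ioi]; linarith
      have h1 : (0:ℝ) < 1 + u / c := hmem
      rw [Set.indicator_of_mem hmem, Set.indicator_of_mem hu]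
      simp only [hφ]
      congr 1
      have e1 : (1 + u / c) - 1 = u / c := by ring
      rw [e1, div_pow, hc2]
      have e2 : t / 2 * (u ^ 2 / t) = u ^ 2 / 2 := by field_simp
      rw [e2, div_div]
    · have hu' : u ≤ -c := by simpa [Set.mem_Ioi, not_lt] using hu
      have hdiv : u / c ≤ -1 := by
        have h := (div_le_div_iff_of_pos_right hc0).mpr hu'
        rwa [neg_div, div_self hc0.ne'] at h
      have hnm : (1 + u / c) ∉ Set.Ioi (0:ℝ) := by
        simp only [Set.mem_Ioi, not_lt]; linarith
      rw [Set.indicator_of_notMem hnm, Set.indicator_of_notMem hu]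
  rw [step1, step2, step3, step4]
  exact integral_congr_ae (Filter.Eventually.of_forall step5)


set_option maxHeartbeats 1600000 in
lemma aux_tendsto (α : ℝ) :
    Tendsto (fun t : ℝ => ∫ u : ℝ, (Set.Ioi (-Real.sqrt t)).indicator
        (fun u => (1 + u / Real.sqrt t) ^ (α - 1) *
          Real.exp (-(u ^ 2 / (2 * (1 + u / Real.sqrt t))))) u)
      atTop (nhds (Real.sqrt (2 * π))) := by
  set γ := |α - 1| with hγdef
  set β := max (1 - α) 0 with hβdef
  have hγ : 0 ≤ γ := abs_nonneg _
  have hβ : 0 ≤ β := le_max_right _ _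
  set C₁ : ℝ := 2 ^ γ + (4 * β) ^ β with hC₁
  set C₂ : ℝ := Real.exp 1 * (4 * γ) ^ γ with hC₂
  have hC₁0 : 0 ≤ C₁ := by positivity
  have hC₂0 : 0 ≤ C₂ := by positivity
  have hβge : 1 - α ≤ β := le_max_left _ _
  have hγge1 : -γ ≤ α - 1 := neg_abs_le _
  have hγge2 : α - 1 ≤ γ := le_abs_self _
  have h2γ : ((4:ℝ) * β) ^ β ≤ C₁ := le_add_of_nonneg_left (by positivity)
  have h2γ' : (2:ℝ) ^ γ ≤ C₁ := le_add_of_nonneg_right (by positivity)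
  set D : ℝ → ℝ := fun u => C₁ * Real.exp (-(u ^ 2 / 2)) + C₂ * Real.exp (-(|u| / 4)) with hD
  have hDnn : ∀ u : ℝ, 0 ≤ D u := by
    intro u
    simp only [hD]
    exact add_nonneg (mul_nonneg hC₁0 (Real.exp_pos _).le) (mul_nonneg hC₂0 (Real.exp_pos _).le)
  clear_value γ β C₁ C₂ D
  have limit_val : ∫ u : ℝ, Real.exp (-(u ^ 2 / 2)) = Real.sqrt (2 * π) := by
    have h := integral_gaussian (1 / 2 : ℝ)
    simp_rw [show ∀ x : ℝ, -(1 / 2 : ℝ) * x ^ 2 = -(x ^ 2 / 2) by intro x; ring] at h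
    rw [h]
    congr 1
    rw [div_div_eq_mul_div, div_one, mul_comm]
  rw [← limit_val]
  have hmeas : ∀ᶠ t : ℝ in atTop, AEStronglyMeasurable (fun u : ℝ =>
      (Set.Ioi (-Real.sqrt t)).indicator
        (fun u => (1 + u / Real.sqrt t) ^ (α - 1) *
          Real.exp (-(u ^ 2 / (2 * (1 + u / Real.sqrt t))))) u) volume := by
    refine Eventually.of_forall (fun t => ?_)
    have m : Measurable fun u : ℝ => (1 + u / Real.sqrt t) ^ (α - 1) *
        Real.exp (-(u ^ 2 / (2 * (1 + u / Real.sqrt t)))) := by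
      fun_prop
    exact (m.indicator measurableSet_Ioi).aestronglyMeasurable
  have hbound : ∀ᶠ t : ℝ in atTop, ∀ᵐ u : ℝ, ‖(Set.Ioi (-Real.sqrt t)).indicator
      (fun u => (1 + u / Real.sqrt t) ^ (α - 1) *
        Real.exp (-(u ^ 2 / (2 * (1 + u / Real.sqrt t))))) u‖ ≤ D u := by
    filter_upwards [eventually_ge_atTop (4 : ℝ)] with t ht
    refine ae_of_all _ (fun u => ?_)
    have hc2 : (2 : ℝ) ≤ Real.sqrt t := by
      rw [show (2:ℝ) = Real.sqrt 4 by
        rw [show (4:ℝ) = 2 ^ 2 by norm_num, Real.sqrt_sq (by norm_num : (0:ℝ) ≤ 2)]]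
      exact Real.sqrt_le_sqrt ht
    set c := Real.sqrt t with hcdef
    have hc0 : (0 : ℝ) < c := by linarith
    have hD0 : 0 ≤ D u := hDnn u
    by_cases hu : u ∈ Set.Ioi (-c)
    swap
    · rw [Set.indicator_of_notMem hu, norm_zero]; exact hD0
    rw [Set.indicator_of_mem hu]
    have hu' : -c < u := hu
    have hdiv : (-1:ℝ) < u / c := by
      have h := (div_lt_div_iff_of_pos_right hc0).mpr hu'
      rwa [neg_div, div_self hc0.ne'] at h
    set s := 1 + u / c with hsdef
    have hs0 : (0:ℝ) < s := by simp only [hsdef]; linarith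
    have hueq : u = (s - 1) * c := by
      rw [hsdef, add_sub_cancel_left, div_mul_cancel₀ _ hc0.ne']
    have hgnn : 0 ≤ s ^ (α - 1) * Real.exp (-(u ^ 2 / (2 * s))) := by positivity
    clear_value s c
    rw [Real.norm_eq_abs, abs_of_nonneg hgnn]
    rcases le_or_gt s (1/2) with hs12 | hs12
    · -- far left : s ≤ 1/2
      have hu1 : u ≤ -1 := by
        have h := mul_le_mul_of_nonneg_right (show s - 1 ≤ -(1/2:ℝ) by linarith)
          (show (0:ℝ) ≤ c by linarith)
        rw [← hueq] at h
        linarith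
      have hu2 : (1:ℝ) ≤ u ^ 2 := by nlinarith
      have b1 : s ^ (α - 1) ≤ s ^ (-β) :=
        Real.rpow_le_rpow_of_exponent_ge hs0 (by linarith) (by linarith)
      have b3 : s ^ (-β) * Real.exp (-(u ^ 2 / (4 * s))) ≤ (4 * β) ^ β := by
        have e1 : s ^ (-β) = (s⁻¹) ^ β := by
          rw [Real.rpow_neg hs0.le, ← Real.inv_rpow hs0.le]
        have e2 : -(u ^ 2 / (4 * s)) = -(u ^ 2 / 4 * s⁻¹) := by
          rw [← div_eq_mul_inv, div_div]
        rw [e1, e2]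
        have hu2' : (0:ℝ) < u ^ 2 / 4 := by nlinarith
        have h := aux_rpow_mul_exp_le hβ hu2' (inv_nonneg.mpr hs0.le)
        refine h.trans ?_
        have e3 : β / (u ^ 2 / 4) = 4 * β / u ^ 2 := by
          rw [div_div_eq_mul_div]; ring
        rw [e3]
        exact Real.rpow_le_rpow (by positivity) (div_le_self (by positivity) hu2) hβ
      have b4 : Real.exp (-(u ^ 2 / (4 * s))) ≤ Real.exp (-(u ^ 2 / 2)) := by
        rw [Real.exp_le_exp, neg_le_neg_iff]
        exact div_le_div_of_nonneg_left (sq_nonneg u) (by linarith) (by linarith)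
      have e3 : Real.exp (-(u ^ 2 / (2 * s)))
          = Real.exp (-(u ^ 2 / (4 * s))) * Real.exp (-(u ^ 2 / (4 * s))) := by
        rw [← Real.exp_add]; congr 1; field_simp; ring
      calc s ^ (α - 1) * Real.exp (-(u ^ 2 / (2 * s)))
          = (s ^ (α - 1) * Real.exp (-(u ^ 2 / (4 * s)))) * Real.exp (-(u ^ 2 / (4 * s))) := by
            rw [e3]; ring
        _ ≤ ((4 * β) ^ β) * Real.exp (-(u ^ 2 / 2)) := by
            refine mul_le_mul ?_ b4 (Real.exp_pos _).le (by positivity)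
            calc s ^ (α - 1) * Real.exp (-(u ^ 2 / (4 * s)))
                ≤ s ^ (-β) * Real.exp (-(u ^ 2 / (4 * s))) :=
                  mul_le_mul_of_nonneg_right b1 (Real.exp_pos _).le
              _ ≤ (4 * β) ^ β := b3
        _ ≤ C₁ * Real.exp (-(u ^ 2 / 2)) :=
            mul_le_mul_of_nonneg_right h2γ (Real.exp_pos _).le
        _ ≤ D u := by
            simp only [hD]
            exact le_add_of_nonneg_right (mul_nonneg hC₂0 (Real.exp_pos _).le)
    · rcases le_or_gt s 1 with hs1 | hs1
      · -- middle : 1/2 < s ≤ 1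
        have b1 : s ^ (α - 1) ≤ 2 ^ γ := by
          have i1 : s ^ (α - 1) ≤ s ^ (-γ) :=
            Real.rpow_le_rpow_of_exponent_ge hs0 hs1 hγge1
          have i2 : s ^ (-γ) ≤ (1/2 : ℝ) ^ (-γ) :=
            Real.rpow_le_rpow_of_nonpos (by norm_num) hs12.le (neg_nonpos.mpr hγ)
          have i3 : (1/2 : ℝ) ^ (-γ) = 2 ^ γ := by
            rw [one_div, Real.inv_rpow (by norm_num : (0:ℝ) ≤ 2), Real.rpow_neg (by norm_num : (0:ℝ) ≤ 2), inv_inv]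
          linarith
        have b2 : Real.exp (-(u ^ 2 / (2 * s))) ≤ Real.exp (-(u ^ 2 / 2)) := by
          rw [Real.exp_le_exp, neg_le_neg_iff]
          exact div_le_div_of_nonneg_left (sq_nonneg u) (by linarith) (by linarith)
        calc s ^ (α - 1) * Real.exp (-(u ^ 2 / (2 * s)))
            ≤ 2 ^ γ * Real.exp (-(u ^ 2 / 2)) :=
              mul_le_mul b1 b2 (Real.exp_pos _).le (by positivity)
          _ ≤ C₁ * Real.exp (-(u ^ 2 / 2)) :=
              mul_le_mul_of_nonneg_right h2γ' (Real.exp_pos _).le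
          _ ≤ D u := by
              simp only [hD]
              exact le_add_of_nonneg_right (mul_nonneg hC₂0 (Real.exp_pos _).le)
      · -- right : s > 1, u > 0
        have hu0 : 0 < u := by
          have h := mul_pos (show (0:ℝ) < s - 1 by linarith) hc0
          rw [← hueq] at h
          exact h
        have hs1u : s ≤ 1 + u := by
          have : u / c ≤ u := div_le_self hu0.le (by linarith)
          simp only [hsdef]; linarith
        have b1 : s ^ (α - 1) ≤ (1 + u) ^ γ := by
          have i1 : s ^ (α - 1) ≤ s ^ γ :=
            Real.rpow_le_rpow_of_exponent_le hs1.le hγge2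
          have i2 : s ^ γ ≤ (1 + u) ^ γ := Real.rpow_le_rpow hs0.le hs1u hγ
          linarith
        have b2 : Real.exp (-(u ^ 2 / (2 * s))) ≤ Real.exp (-((u - 1) / 2)) := by
          rw [Real.exp_le_exp, neg_le_neg_iff]
          have i1 : u ^ 2 / (2 * (1 + u)) ≤ u ^ 2 / (2 * s) :=
            div_le_div_of_nonneg_left (sq_nonneg u) (by linarith) (by linarith)
          have i2 : (u - 1) / 2 ≤ u ^ 2 / (2 * (1 + u)) := by
            rw [div_le_div_iff₀ (show (0:ℝ) < 2 by norm_num)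
              (show (0:ℝ) < 2 * (1 + u) by linarith)]
            nlinarith
          linarith
        have e1 : Real.exp (-((u - 1) / 2))
            = Real.exp 1 * Real.exp (-((1 + u) / 4)) * Real.exp (-((1 + u) / 4)) := by
          rw [← Real.exp_add, ← Real.exp_add]; congr 1; ring
        have b3 : (1 + u) ^ γ * Real.exp (-((1 + u) / 4)) ≤ (4 * γ) ^ γ := by
          have := aux_rpow_mul_exp_le hγ (show (0:ℝ) < 1/4 by norm_num)
            (show (0:ℝ) ≤ 1 + u by linarith)
          rw [show -(1/4 * (1 + u)) = -((1 + u)/4) by ring] at this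
          rw [show γ / (1/4 : ℝ) = 4 * γ by ring] at this
          exact this
        have b4 : Real.exp (-((1 + u) / 4)) ≤ Real.exp (-(|u| / 4)) := by
          rw [Real.exp_le_exp, neg_le_neg_iff, abs_of_pos hu0]
          linarith
        calc s ^ (α - 1) * Real.exp (-(u ^ 2 / (2 * s)))
            ≤ (1 + u) ^ γ * Real.exp (-((u - 1) / 2)) :=
              mul_le_mul b1 b2 (Real.exp_pos _).le (by positivity)
          _ = Real.exp 1 * ((1 + u) ^ γ * Real.exp (-((1 + u) / 4))) * Real.exp (-((1 + u) / 4)) := by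
              rw [e1]; ring
          _ ≤ Real.exp 1 * ((4 * γ) ^ γ) * Real.exp (-(|u| / 4)) := by
              refine mul_le_mul ?_ b4 (Real.exp_pos _).le (by positivity)
              exact mul_le_mul_of_nonneg_left b3 (Real.exp_pos _).le
          _ = C₂ * Real.exp (-(|u| / 4)) := by rw [hC₂]
          _ ≤ D u := by
              simp only [hD]
              exact le_add_of_nonneg_left (mul_nonneg hC₁0 (Real.exp_pos _).le)
  have hint : Integrable D := by
    rw [hD]
    have h1 : Integrable (fun u : ℝ => Real.exp (-(u ^ 2 / 2))) := by
      have h0 := integrable_exp_neg_mul_sq (show (0:ℝ) < 1/2 by norm_num)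
      have h2 : (fun u : ℝ => Real.exp (-(u ^ 2 / 2)))
          = fun x : ℝ => Real.exp (-(1/2 : ℝ) * x ^ 2) := by
        funext x; congr 1; ring
      rw [h2]; exact h0
    exact (h1.const_mul C₁).add (aux_integrable_exp_neg_abs.const_mul C₂)
  have hlim : ∀ᵐ u : ℝ, Tendsto (fun t : ℝ => (Set.Ioi (-Real.sqrt t)).indicator
      (fun u => (1 + u / Real.sqrt t) ^ (α - 1) *
        Real.exp (-(u ^ 2 / (2 * (1 + u / Real.sqrt t))))) u)
      atTop (nhds (Real.exp (-(u ^ 2 / 2)))) := by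
    refine ae_of_all _ (fun u => ?_)
    have hsq : Tendsto Real.sqrt atTop atTop := by
      have h := tendsto_rpow_atTop (show (0:ℝ) < 1/2 by norm_num)
      exact h.congr (fun x => (Real.sqrt_eq_rpow x).symm)
    have h1 : Tendsto (fun t : ℝ => u / Real.sqrt t) atTop (nhds 0) :=
      tendsto_const_nhds.div_atTop hsq
    have hbase : Tendsto (fun t : ℝ => 1 + u / Real.sqrt t) atTop (nhds 1) := by
      simpa using tendsto_const_nhds.add h1
    have hr : Tendsto (fun t : ℝ => (1 + u / Real.sqrt t) ^ (α - 1)) atTop (nhds 1) := by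
      have := hbase.rpow_const (p := α - 1) (Or.inl one_ne_zero)
      simpa using this
    have hexp : Tendsto (fun t : ℝ => Real.exp (-(u ^ 2 / (2 * (1 + u / Real.sqrt t)))))
        atTop (nhds (Real.exp (-(u ^ 2 / 2)))) := by
      have hden : Tendsto (fun t : ℝ => 2 * (1 + u / Real.sqrt t)) atTop (nhds 2) := by
        simpa using tendsto_const_nhds.mul hbase
      have := ((tendsto_const_nhds (x := u ^ 2)).div hden (by norm_num)).neg
      exact this.rexp
    have hg : Tendsto (fun t : ℝ => (1 + u / Real.sqrt t) ^ (α - 1) *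
        Real.exp (-(u ^ 2 / (2 * (1 + u / Real.sqrt t))))) atTop (nhds (Real.exp (-(u ^ 2 / 2)))) := by
      simpa using hr.mul hexp
    refine hg.congr' ?_
    filter_upwards [eventually_ge_atTop ((|u| + 1) ^ 2)] with t ht
    have h2 : |u| + 1 ≤ Real.sqrt t := by
      rw [show Real.sqrt t = Real.sqrt t from rfl]
      have := Real.sqrt_le_sqrt ht
      rwa [Real.sqrt_sq (by positivity : (0:ℝ) ≤ |u| + 1)] at this
    have h3 : -Real.sqrt t < u := by
      have := neg_abs_le u
      nlinarith [abs_nonneg u]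
    exact (Set.indicator_of_mem (Set.mem_Ioi.mpr h3)
      (fun u => (1 + u / Real.sqrt t) ^ (α - 1) *
        Real.exp (-(u ^ 2 / (2 * (1 + u / Real.sqrt t)))))).symm
  exact tendsto_integral_filter_of_dominated_convergence D hmeas hbound hint hlim


/-- The modified Bessel function of the second kind. -/
noncomputable def besselK (α : ℝ) (t : ℝ) : ℝ :=
  (1 / 2) * ∫ s in Set.Ioi (0 : ℝ), s ^ (α - 1) * Real.exp (-(t / 2) * (s + 1 / s))

/-- `K_α(z) ~ √(π/(2z)) e^{−z}` as `z → ∞`. -/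
theorem besselK_asymptotic (α : ℝ) :
    Tendsto (fun z : ℝ => besselK α z / (Real.sqrt (π / (2 * z)) * Real.exp (-z)))
      atTop (nhds 1) := by
  have h1 : Tendsto (fun t : ℝ => Real.sqrt t * (Real.exp t *
      ∫ s in Set.Ioi (0 : ℝ), s ^ (α - 1) * Real.exp (-(t / 2) * (s + 1 / s))))
      atTop (nhds (Real.sqrt (2 * π))) := by
    refine Tendsto.congr' ?_ (aux_tendsto α)
    filter_upwards [eventually_gt_atTop (0 : ℝ)] with t ht
    exact (aux_key α t ht).symm
  have hπ : (0 : ℝ) < π := Real.pi_pos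
  have hsq : Real.sqrt (2 * π) ≠ 0 := by positivity
  have h2 := h1.div_const (Real.sqrt (2 * π))
  rw [div_self hsq] at h2
  refine Tendsto.congr' ?_ h2
  filter_upwards [eventually_gt_atTop (0 : ℝ)] with z hz
  have hsz : (0 : ℝ) < Real.sqrt z := Real.sqrt_pos.mpr hz
  have e1 : Real.sqrt (π / (2 * z)) = Real.sqrt (2 * π) / (2 * Real.sqrt z) := by
    rw [show π / (2 * z) = (2 * π) / (4 * z) by field_simp; ring,
      Real.sqrt_div (by positivity : (0:ℝ) ≤ 2 * π),
      show (4 : ℝ) * z = 2 ^ 2 * z by ring,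
      Real.sqrt_mul (by positivity : (0:ℝ) ≤ (2:ℝ) ^ 2),
      Real.sqrt_sq (by norm_num : (0:ℝ) ≤ 2)]
  rw [besselK, e1, Real.exp_neg]
  field_simp
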